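/- In a Coxeter group W of type A or B, for any fully commutative w ∈ W_c and generator s ∈ S with a reduced expression of w ending in some s' that does not commute with s, one has ℓ(ws) > ℓ(w). -/

import Mathlib

open CoxeterSystem LaurentPolynomial

noncomputable section

/-- The Laurent polynomial ring `A = ℤ[v, v⁻¹]`, with `v = T 1`. -/
abbrev LA := LaurentPolynomial ℤ

/-- `q_c = v + v⁻¹`. -/
def qc : LA := T 1 + T (-1)

/-- The subring `A⁻ = ℤ[v⁻¹]` of `A`. -/
def LAminus : Subring LA := Subring.closure {T (-1)}

variable {B : Type*} {W : Type*} [Group W]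

/-- `w` is complex: it has a reduced factorization `x₁ * w_{ss'} * x₂`, where `w_{ss'}` is the
longest element of a finite rank-2 parabolic subgroup `⟨s, s'⟩` with `s`, `s'` non-commuting
(`3 ≤ M i i'`, which also excludes infinite bonds `M i i' = 0`). -/
def CoxeterSystem.IsComplexElt {M : CoxeterMatrix B} (cs : CoxeterSystem M W) (w : W) : Prop :=
  ∃ (x₁ x₂ : W) (i i' : B), 3 ≤ M i i' ∧
    w = x₁ * cs.wordProd (CoxeterSystem.braidWord M i i') * x₂ ∧
    cs.length w = cs.length x₁ + M i i' + cs.length x₂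

/-- `w` is fully commutative, i.e. not complex; `cs.FC` plays the role of the set `W_c`. -/
def CoxeterSystem.FC {M : CoxeterMatrix B} (cs : CoxeterSystem M W) (w : W) : Prop :=
  ¬ cs.IsComplexElt w

/-- Bruhat--Chevalley order, via the subword characterization. -/
def CoxeterSystem.BruhatLE {M : CoxeterMatrix B} (cs : CoxeterSystem M W) (x w : W) : Prop :=
  ∃ ω : List B, cs.IsReduced ω ∧ cs.wordProd ω = w ∧
    ∃ κ : List B, κ.Sublist ω ∧ cs.wordProd κ = x

namespace CoxAux

open List

open scoped Classical

variable {B : Type*} {W : Type*} [Group W] {M : CoxeterMatrix B} (cs : CoxeterSystem M W)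

local prefix:100 "s" => cs.simple
local prefix:100 "π" => cs.wordProd
local prefix:100 "ris" => cs.rightInvSeq
local prefix:100 "ℓ" => cs.length

lemma conj_simple_eq_simple_iff (i : B) (x : W) :
    s i * x * s i = s i ↔ x = s i := by
  constructor
  · intro h
    have := congrArg (fun z => s i * z * s i) h
    simpa [mul_assoc, cs.simple_mul_simple_cancel_left,
      cs.simple_mul_simple_cancel_right] using this
  · rintro rfl
    rw [cs.simple_mul_simple_self, one_mul]

/-- The sign representation permutation attached to a simple generator. -/
noncomputable def eta (i : B) : Equiv.Perm (W × ZMod 2) :=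
  Function.Involutive.toPerm
    (fun x => (s i * x.1 * s i, x.2 + if x.1 = s i then 1 else 0))
    (by
      intro x
      dsimp only
      refine Prod.ext ?_ ?_
      · dsimp only
        simp only [← mul_assoc]
        rw [cs.simple_mul_simple_self, one_mul, cs.simple_mul_simple_cancel_right]
      · dsimp only
        rw [conj_simple_eq_simple_iff]
        split_ifs with h
        · rw [add_assoc]; rw [(by decide : (1:ZMod 2)+1 = 0), add_zero]
        · rw [add_zero, add_zero])

lemma eta_apply (i : B) (p : W × ZMod 2) :
    eta cs i p = (s i * p.1 * s i, p.2 + if p.1 = s i then 1 else 0) := rfl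

/-- Mod-2 count of `x` in the right inversion sequence of `ω`. -/
noncomputable def nsum (ω : List B) (x : W) : ZMod 2 :=
  ∑ j ∈ Finset.range ω.length, if (ris ω).getD j 1 = x then 1 else 0

lemma rightInvSeq_cons (i : B) (ω : List B) :
    ris (i :: ω) = ((π ω)⁻¹ * s i * π ω) :: ris ω := rfl

lemma prod_eta_apply (ω : List B) (p : W × ZMod 2) :
    (List.prod (ω.map (eta cs))) p = (π ω * p.1 * (π ω)⁻¹, p.2 + nsum cs ω p.1) := by
  induction ω generalizing p with
  | nil => simp [nsum]
  | cons i ω ih =>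
    rw [List.map_cons, List.prod_cons, Equiv.Perm.mul_apply, ih, eta_apply]
    have hns : nsum cs (i :: ω) p.1
        = nsum cs ω p.1 + (if π ω * p.1 * (π ω)⁻¹ = s i then 1 else 0) := by
      unfold nsum
      rw [List.length_cons, Finset.sum_range_succ']
      refine congrArg₂ (· + ·) ?_ ?_
      · apply Finset.sum_congr rfl
        intro j _
        rw [rightInvSeq_cons, List.getD_cons_succ]
      · rw [rightInvSeq_cons, List.getD_cons_zero]
        refine if_congr ?_ rfl rfl
        constructor
        · intro h
          rw [← h]
          group
        · intro h
          have := congrArg (fun z => (π ω)⁻¹ * z * (π ω)) h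
          rw [← this]
          group
    refine Prod.ext ?_ ?_
    · simp [cs.wordProd_cons, mul_assoc]
    · simp only [hns]
      ring

section Alt

variable (i i' : B)

lemma conj_ab_zpow (z : ℤ) :
    s i' * (s i * s i') ^ z = (s i * s i') ^ (-z) * s i' := by
  have hconj : s i' * (s i * s i') * (s i')⁻¹ = (s i * s i')⁻¹ := by
    rw [cs.inv_simple, mul_inv_rev, cs.inv_simple, cs.inv_simple]
    calc s i' * (s i * s i') * s i' = s i' * s i * (s i' * s i') := by group
    _ = s i' * s i := by rw [cs.simple_mul_simple_self, mul_one]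
  have := map_zpow (MulAut.conj (s i')) (s i * s i') z
  simp only [MulAut.conj_apply] at this
  rw [hconj, inv_zpow, ← zpow_neg] at this
  have h2 : s i' * (s i * s i') ^ z * (s i')⁻¹ * s i' = (s i * s i') ^ (-z) * s i' :=
    congrArg (· * s i') this
  simpa [cs.inv_simple, mul_assoc, cs.simple_mul_simple_self] using h2


lemma bab_eq : s i' * s i * s i' = (s i * s i') ^ (-1 : ℤ) * s i' := by
  rw [zpow_neg_one, mul_inv_rev, cs.inv_simple, cs.inv_simple, mul_assoc]


lemma bab_mul (y : W) : s i' * (s i * (s i' * y)) = (s i * s i') ^ (-1:ℤ) * (s i' * y) := by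
  rw [← mul_assoc, ← mul_assoc, bab_eq, mul_assoc]

lemma getD_ris_alternatingWord :
    ∀ (k j : ℕ), j < k →
      (ris (alternatingWord i i' k)).getD j 1
        = (s i * s i') ^ ((j : ℤ) + 1 - k) * s i' := by
  intro k
  induction k with
  | zero => omega
  | succ k ih =>
    intro j hj
    rw [alternatingWord_succ', rightInvSeq_cons]
    match j with
    | 0 =>
      rw [List.getD_cons_zero, cs.prod_alternatingWord_eq_mul_pow]
      rcases Nat.even_or_odd k with he | ho
      · obtain ⟨r, hr⟩ := he
        have he' : Even k := ⟨r, hr⟩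
        have hk2 : k / 2 = r := by omega
        simp only [if_pos he', hk2, one_mul]
        rw [← zpow_natCast (s i * s i') r]
        simp only [mul_assoc]
        rw [conj_ab_zpow]
        simp only [← mul_assoc]
        rw [← zpow_neg, ← zpow_add]
        congr 2
        push_cast
        omega
      · obtain ⟨r, hr⟩ := ho
        have hne : ¬ Even k := by rw [Nat.even_iff]; omega
        have hk2 : k / 2 = r := by omega
        simp only [if_neg hne, hk2]
        rw [mul_inv_rev, cs.inv_simple, ← zpow_natCast (s i * s i') r]
        simp only [mul_assoc]
        rw [bab_mul, conj_ab_zpow]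
        simp only [← mul_assoc]
        rw [← zpow_neg, ← zpow_add, ← zpow_add]
        congr 2
        push_cast
        omega
    | Nat.succ j' =>
      rw [List.getD_cons_succ, ih j' (by omega)]
      congr 2
      push_cast
      ring

lemma nsum_alternatingWord_two_mul (x : W) :
    nsum cs (alternatingWord i i' (2 * M i i')) x = 0 := by
  set m := M i i' with hm
  have habm : (s i * s i') ^ (m : ℤ) = 1 := by
    rw [zpow_natCast, hm, cs.simple_mul_simple_pow]
  unfold nsum
  rw [length_alternatingWord]
  set L := ris (alternatingWord i i' (2*m)) with hL
  have hent : ∀ j, j < m → L.getD (m + j) 1 = L.getD j 1 := by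
    intro j hjm
    rw [hL, getD_ris_alternatingWord cs i i' (2*m) (m+j) (by omega),
      getD_ris_alternatingWord cs i i' (2*m) j (by omega)]
    have : ((m + j : ℕ) : ℤ) + 1 - ((2*m : ℕ) : ℤ) = (((j:ℕ):ℤ) + 1 - ((2*m:ℕ):ℤ)) + (m:ℤ) := by
      push_cast; ring
    rw [this, zpow_add, habm, mul_one]
  have h2m : 2 * m = m + m := by ring
  rw [h2m, ← Finset.sum_range_add_sum_Ico _ (by omega : m ≤ m + m),
    Finset.sum_Ico_eq_sum_range]
  simp only [Nat.add_sub_cancel_left]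
  have hcongr : ∀ j ∈ Finset.range m,
      (if L.getD (m + j) 1 = x then (1:ZMod 2) else 0)
        = (if L.getD j 1 = x then (1:ZMod 2) else 0) := by
    intro j hj
    rw [hent j (Finset.mem_range.mp hj)]
  rw [Finset.sum_congr rfl hcongr]
  have hself : ∀ y : ZMod 2, y + y = 0 := by decide
  exact hself _

lemma prod_eta_alternating :
    ∀ k : ℕ, List.prod ((alternatingWord i i' (2 * k)).map (eta cs))
      = (eta cs i * eta cs i') ^ k := by
  intro k
  induction k with
  | zero => simp [alternatingWord]
  | succ k ih =>
    have h2 : 2 * (k + 1) = (2 * k + 1) + 1 := by ring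
    rw [h2, alternatingWord_succ', alternatingWord_succ']
    have ho : ¬ Even (2 * k + 1) := by rw [Nat.even_iff]; omega
    have he : Even (2 * k) := ⟨k, by ring⟩
    rw [if_neg ho, if_pos he]
    rw [List.map_cons, List.map_cons, List.prod_cons, List.prod_cons, ih]
    rw [pow_succ']
    rw [mul_assoc]

lemma eta_liftable : M.IsLiftable (eta cs) := by
  intro i i'
  rw [← prod_eta_alternating cs i i' (M i i')]
  ext p
  · rw [Equiv.Perm.one_apply, prod_eta_apply]
    have hone : π (alternatingWord i i' (2 * M i i')) = 1 := by
      have := cs.prod_alternatingWord_eq_prod_alternatingWord_sub i i' (2 * M i i')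
        (by omega)
      simpa [(by omega : M i i' * 2 - 2 * M i i' = 0), alternatingWord] using this
    rw [hone, nsum_alternatingWord_two_mul]
    simp
  · rw [Equiv.Perm.one_apply, prod_eta_apply]
    have hone : π (alternatingWord i i' (2 * M i i')) = 1 := by
      have := cs.prod_alternatingWord_eq_prod_alternatingWord_sub i i' (2 * M i i')
        (by omega)
      simpa [(by omega : M i i' * 2 - 2 * M i i' = 0), alternatingWord] using this
    rw [hone, nsum_alternatingWord_two_mul]
    simp

end Alt

/-- The sign representation of the Coxeter group. -/
noncomputable def phi : W →* Equiv.Perm (W × ZMod 2) :=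
  cs.lift ⟨eta cs, eta_liftable cs⟩

lemma phi_wordProd (ω : List B) : phi cs (π ω) = List.prod (ω.map (eta cs)) := by
  unfold wordProd
  rw [map_list_prod, List.map_map]
  congr 1
  apply List.map_congr_left
  intro i _
  exact cs.lift_apply_simple (eta_liftable cs) i

/-- Key parity invariance: the mod-2 inversion count depends only on the product. -/
lemma nsum_eq_of_wordProd_eq {ω ω' : List B} (h : π ω = π ω') (x : W) :
    nsum cs ω x = nsum cs ω' x := by
  have h1 := prod_eta_apply cs ω (x, 0)
  have h2 := prod_eta_apply cs ω' (x, 0)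
  rw [← phi_wordProd] at h1 h2
  rw [h] at h1
  have := h1.symm.trans h2
  have := congrArg Prod.snd this
  simpa using this

/-- If `c` is a right descent of `u = π ω`, then the mod-2 count of `s c` in the
right inversion sequence of `ω` is `1`. -/
lemma nsum_eq_one_of_isRightDescent {u : W} {c : B}
    (hd : cs.IsRightDescent u c) {ω : List B} (hω : π ω = u) :
    nsum cs ω (s c) = 1 := by
  obtain ⟨κ, hκlen, hκprod⟩ := cs.exists_reduced_word (u * s c)
  have hπκc : π (κ ++ [c]) = u := by
    rw [cs.wordProd_append, cs.wordProd_singleton, ← hκprod,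
      cs.simple_mul_simple_cancel_right]
  have hlenc : cs.length u = κ.length + 1 := by
    rw [← (hκlen : ℓ (π κ) = κ.length), ← hκprod]
    exact ((cs.isRightDescent_iff).mp hd).symm
  have hred : cs.IsReduced (κ ++ [c]) := by
    unfold CoxeterSystem.IsReduced
    rw [hπκc, List.length_append, List.length_singleton, hlenc]
  rw [nsum_eq_of_wordProd_eq cs (hω.trans hπκc.symm)]
  unfold nsum
  rw [List.length_append, List.length_singleton, Finset.sum_range_succ]
  have hlast : (ris (κ ++ [c])).getD κ.length 1 = s c := by
    rw [cs.getD_rightInvSeq]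
    have hdrop : List.drop (κ.length + 1) (κ ++ [c]) = [] := by
      apply List.drop_eq_nil_of_le
      simp
    rw [hdrop, List.getElem?_concat_length]
    simp
  have hothers : ∀ j ∈ Finset.range κ.length,
      (if (ris (κ ++ [c])).getD j 1 = s c then (1 : ZMod 2) else 0) = 0 := by
    intro j hj
    have hjlt : j < κ.length := Finset.mem_range.mp hj
    rw [if_neg]
    intro hcontra
    have hnodup := hred.nodup_rightInvSeq
    have hlenris : (ris (κ ++ [c])).length = κ.length + 1 := by
      rw [cs.length_rightInvSeq, List.length_append, List.length_singleton]
    have hj1 : j < (ris (κ ++ [c])).length := by omega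
    have hj2 : κ.length < (ris (κ ++ [c])).length := by omega
    have hget1 : (ris (κ ++ [c])).getD j 1 = (ris (κ ++ [c]))[j] := List.getD_eq_getElem _ _ hj1
    have hget2 : (ris (κ ++ [c])).getD κ.length 1 = (ris (κ ++ [c]))[κ.length] :=
      List.getD_eq_getElem _ _ hj2
    have : (ris (κ ++ [c]))[j] = (ris (κ ++ [c]))[κ.length] := by
      rw [← hget1, ← hget2, hcontra, hlast]
    have := (hnodup.getElem_inj_iff).mp this
    omega
  rw [Finset.sum_congr rfl hothers, hlast, if_pos rfl]
  simp

/-- Exchange property. -/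
lemma exists_eraseIdx_of_isRightDescent {u : W} {c : B}
    (hd : cs.IsRightDescent u c) {ω : List B} (hω : π ω = u) :
    ∃ j, j < ω.length ∧ u * s c = π (ω.eraseIdx j) := by
  have h1 : nsum cs ω (s c) = 1 := nsum_eq_one_of_isRightDescent cs hd hω
  have h2 : ∃ j, j < ω.length ∧ (ris ω).getD j 1 = s c := by
    by_contra hcon
    push_neg at hcon
    have : nsum cs ω (s c) = 0 := by
      unfold nsum
      apply Finset.sum_eq_zero
      intro j hj
      rw [if_neg (hcon j (Finset.mem_range.mp hj))]
    rw [this] at h1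
    exact (by decide : (0 : ZMod 2) ≠ 1) h1
  obtain ⟨j, hj, hgetD⟩ := h2
  refine ⟨j, hj, ?_⟩
  rw [← hω, ← hgetD]
  exact cs.wordProd_mul_getD_rightInvSeq ω j

lemma commute_of_mul_eq_one {i i' : B} (h : s i * s i' = 1) :
    Commute (s i) (s i') := by
  have : s i = (s i')⁻¹ := eq_inv_of_mul_eq_one_left h
  rw [cs.inv_simple] at this
  rw [this]

lemma commute_of_sq_eq_one {i i' : B} (h : (s i * s i') ^ 2 = 1) :
    Commute (s i) (s i') := by
  rw [pow_two] at h
  have h2 : s i * s i' = (s i * s i')⁻¹ := eq_inv_of_mul_eq_one_left h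
  rw [mul_inv_rev, cs.inv_simple, cs.inv_simple] at h2
  exact h2

lemma three_le_M {i i' : B} (h0 : M i i' ≠ 0) (hnc : ¬ Commute (s i) (s i')) :
    3 ≤ M i i' := by
  by_contra hcon
  push_neg at hcon
  have hpow := cs.simple_mul_simple_pow i i'
  interval_cases h : M i i'
  · exact h0 rfl
  · rw [pow_one] at hpow
    exact hnc (commute_of_mul_eq_one cs hpow)
  · exact hnc (commute_of_sq_eq_one cs hpow)

lemma orderOf_simple_mul_simple {i i' : B} (h3 : 3 ≤ M i i') (h4 : M i i' ≤ 4)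
    (hnc : ¬ Commute (s i) (s i')) : orderOf (s i * s i') = M i i' := by
  have hpow := cs.simple_mul_simple_pow i i'
  have hdvd : orderOf (s i * s i') ∣ M i i' := orderOf_dvd_of_pow_eq_one hpow
  have h1 : orderOf (s i * s i') ≠ 1 := by
    intro h
    exact hnc (commute_of_mul_eq_one cs (orderOf_eq_one_iff.mp h))
  have h2 : orderOf (s i * s i') ≠ 2 := by
    intro h
    exact hnc (commute_of_sq_eq_one cs (h ▸ pow_orderOf_eq_one _))
  have h0 : orderOf (s i * s i') ≠ 0 := by
    intro h
    rw [h] at hdvd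
    omega
  rcases (by omega : M i i' = 3 ∨ M i i' = 4) with hm | hm <;> rw [hm] at hdvd ⊢
  · have := Nat.le_of_dvd (by norm_num) hdvd
    interval_cases h : orderOf (s i * s i') <;> omega
  · have := Nat.le_of_dvd (by norm_num) hdvd
    interval_cases h : orderOf (s i * s i') <;> omega

lemma nsum_alternating_first_letter {j j' : B}
    (hord : orderOf (s j * s j') = M j j') {k : ℕ} (hk : k < M j j') :
    nsum cs (alternatingWord j j' k) (s j) = 0 := by
  unfold nsum
  apply Finset.sum_eq_zero
  intro jdx hjdx
  rw [length_alternatingWord] at hjdx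
  have hjk := Finset.mem_range.mp hjdx
  rw [if_neg]
  rw [getD_ris_alternatingWord cs j j' k jdx hjk]
  intro heq
  have h1 : (s j * s j') ^ ((jdx : ℤ) + 1 - k) = s j * (s j')⁻¹ :=
    eq_mul_inv_of_mul_eq heq
  rw [cs.inv_simple] at h1
  have h2 : (s j * s j') ^ ((jdx : ℤ) + 1 - k - 1) = 1 := by
    rw [zpow_sub, h1, zpow_one, mul_inv_cancel]
  have h3 : ((M j j' : ℕ) : ℤ) ∣ ((jdx : ℤ) + 1 - k - 1) := by
    rw [← hord]
    exact orderOf_dvd_iff_zpow_eq_one.mpr h2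
  have h4 : ((M j j' : ℕ) : ℤ) ∣ ((k : ℤ) - jdx) := by
    have : ((k : ℤ) - jdx) = -((jdx : ℤ) + 1 - k - 1) := by ring
    rw [this]
    exact dvd_neg.mpr h3
  have h5 := Int.le_of_dvd (by omega : (0:ℤ) < (k : ℤ) - jdx) h4
  omega

/-- Key dihedral lemma: if `w` has right descents at a non-commuting pair `i, i'`
with finite small bond, then `w` has a reduced suffix which is the full braid word. -/
lemma exists_braid_suffix {i i' : B} (h3 : 3 ≤ M i i') (h4 : M i i' ≤ 4)
    (hnc : ¬ Commute (s i) (s i')) {w : W}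
    (hd : cs.IsRightDescent w i) (hd' : cs.IsRightDescent w i') :
    ∃ (x : W) (j j' : B), ((j = i ∧ j' = i') ∨ (j = i' ∧ j' = i)) ∧
      w = x * π (alternatingWord j j' (M j j')) ∧ ℓ w = ℓ x + M j j' := by
  set m := M i i' with hm
  have hmsym : M i' i = m := M.symmetric i' i
  have hordA : orderOf (s i * s i') = M i i' :=
    orderOf_simple_mul_simple cs h3 h4 hnc
  have hordB : orderOf (s i' * s i) = M i' i := by
    refine orderOf_simple_mul_simple cs ?_ ?_ ?_
    · omega
    · omega
    · intro h
      exact hnc h.symm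
  have key : ∀ k : ℕ, 1 ≤ k → k ≤ m →
      ∃ (x : W) (j j' : B), ((j = i ∧ j' = i') ∨ (j = i' ∧ j' = i)) ∧
        w = x * π (alternatingWord j j' k) ∧ ℓ w = ℓ x + k := by
    intro k
    induction k with
    | zero => omega
    | succ k ih =>
      intro _ hk1m
      by_cases hk0 : k = 0
      · subst hk0
        refine ⟨w * s i', i, i', Or.inl ⟨rfl, rfl⟩, ?_, ?_⟩
        · have : alternatingWord i i' 1 = [i'] := rfl
          rw [this, cs.wordProd_singleton, cs.simple_mul_simple_cancel_right]
        · have := (cs.isRightDescent_iff).mp hd'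
          omega
      · obtain ⟨x, j, j', hpair, hwx, hlen⟩ := ih (by omega) (by omega)
        have hdj : cs.IsRightDescent w j := by
          rcases hpair with ⟨rfl, rfl⟩ | ⟨rfl, rfl⟩
          · exact hd
          · exact hd'
        have hmjj : M j j' = m := by
          rcases hpair with ⟨rfl, rfl⟩ | ⟨rfl, rfl⟩
          · rfl
          · exact hmsym
        have hordjj : orderOf (s j * s j') = M j j' := by
          rcases hpair with ⟨rfl, rfl⟩ | ⟨rfl, rfl⟩
          · exact hordA
          · exact hordB
        obtain ⟨ξ, hξlen, hξprod⟩ := cs.exists_reduced_word x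
        set α := alternatingWord j j' k with hα
        have hαlen : α.length = k := length_alternatingWord j j' k
        have hωprod : π (ξ ++ α) = w := by
          rw [cs.wordProd_append, ← hξprod, ← hwx]
        obtain ⟨p, hp, hex⟩ := exists_eraseIdx_of_isRightDescent cs hdj hωprod
        rw [List.length_append, hαlen] at hp
        have hlenws : ℓ (w * s j) + 1 = ℓ w := (cs.isRightDescent_iff).mp hdj
        by_cases hcase : p < ξ.length
        · -- deletion in the prefix: the alternating suffix grows
          rw [List.eraseIdx_append_of_lt_length hcase] at hex
          set x' := π (ξ.eraseIdx p) with hx'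
          have hwsj : w * s j = x' * π α := by
            rw [hex, cs.wordProd_append]
          have hlx'le : ℓ x' ≤ ξ.length - 1 := by
            have h := cs.length_wordProd_le (ξ.eraseIdx p)
            rwa [List.length_eraseIdx, if_pos hcase] at h
          have hlge : ℓ (w * s j) ≤ ℓ x' + k := by
            rw [hwsj]
            have h1 := cs.length_mul_le x' (π α)
            have h2 := cs.length_wordProd_le α
            rw [hαlen] at h2
            omega
          have hlx' : ℓ x' + 1 = ℓ x := by
            have hξlen' : ℓ (π ξ) = ξ.length := hξlen
            rw [← hξprod] at hξlen'
            omega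
          refine ⟨x', j', j, ?_, ?_, ?_⟩
          · tauto
          · rw [alternatingWord_succ, cs.wordProd_concat, ← mul_assoc, ← hwsj,
              cs.simple_mul_simple_cancel_right]
          · omega
        · -- deletion in the suffix: impossible
          exfalso
          push_neg at hcase
          rw [List.eraseIdx_append_of_length_le hcase] at hex
          have hwsj : w * s j = x * π (α.eraseIdx (p - ξ.length)) := by
            rw [hex, cs.wordProd_append, hξprod]
          have hcancel : π α * s j = π (α.eraseIdx (p - ξ.length)) := by
            have : x * (π α * s j) = x * π (α.eraseIdx (p - ξ.length)) := by
              rw [← mul_assoc, ← hwx, hwsj]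
            exact mul_left_cancel this
          have hlπα : ℓ (π α) = k := by
            have h1 := cs.length_wordProd_le α
            have h2 := cs.length_mul_le x (π α)
            rw [hαlen] at h1
            rw [← hwx] at h2
            omega
          have hldrop : ℓ (π α * s j) ≤ k - 1 := by
            rw [hcancel]
            have h := cs.length_wordProd_le (α.eraseIdx (p - ξ.length))
            rw [List.length_eraseIdx, if_pos (by omega), hαlen] at h
            exact h
          have hdesc : cs.IsRightDescent (π α) j := by
            unfold CoxeterSystem.IsRightDescent
            omega
          have hodd : nsum cs α (s j) = 1 :=
            nsum_eq_one_of_isRightDescent cs hdesc rfl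
          have hzero : nsum cs α (s j) = 0 :=
            nsum_alternating_first_letter cs hordjj (by omega)
          rw [hodd] at hzero
          exact (by decide : (1 : ZMod 2) ≠ 0) hzero
  obtain ⟨x, j, j', hpair, hwx, hlen⟩ := key m (by omega) le_rfl
  have hmjj : M j j' = m := by
    rcases hpair with ⟨rfl, rfl⟩ | ⟨rfl, rfl⟩
    · rfl
    · exact hmsym
  refine ⟨x, j, j', hpair, ?_, ?_⟩
  · rw [hmjj]
    exact hwx
  · rw [hmjj]
    exact hlen

end CoxAux


/-- In a Coxeter group of type `A` or `B`, if `w` is fully commutative and has a reduced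
expression ending in a generator `s'` which does not commute with `s`, then `ℓ(ws) > ℓ(w)`. -/
theorem length_mul_gt_of_fc_of_ends_noncommuting {n : ℕ} {M : CoxeterMatrix (Fin n)}
    (hM : M = CoxeterMatrix.Aₙ n ∨ M = CoxeterMatrix.Bₙ n)
    (cs : CoxeterSystem M W) (w u : W) (s s' : Fin n)
    (hfc : cs.FC w)
    (hw : w = u * cs.simple s') (hlen : cs.length w = cs.length u + 1)
    (hnc : ¬ Commute (cs.simple s) (cs.simple s')) :
    cs.length w < cs.length (w * cs.simple s) := by
  classical
  have hMle : M s s' ≤ 4 ∧ M s s' ≠ 0 := by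
    rcases hM with rfl | rfl
    · dsimp [CoxeterMatrix.Aₙ, CoxeterMatrix.A, Matrix.of_apply]
      split_ifs <;> norm_num
    · dsimp [CoxeterMatrix.Bₙ, CoxeterMatrix.B, Matrix.of_apply]
      split_ifs <;> norm_num
  by_contra hcon
  push_neg at hcon
  have hds : cs.IsRightDescent w s := by
    rcases cs.length_mul_simple w s with h | h
    · omega
    · unfold CoxeterSystem.IsRightDescent
      omega
  have hds' : cs.IsRightDescent w s' := by
    have hws' : w * cs.simple s' = u := by
      rw [hw, cs.simple_mul_simple_cancel_right]
    unfold CoxeterSystem.IsRightDescent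
    rw [hws']
    omega
  have h3 : 3 ≤ M s s' := CoxAux.three_le_M cs hMle.2 hnc
  obtain ⟨x, j, j', hpair, hwx, hlenx⟩ :=
    CoxAux.exists_braid_suffix cs h3 hMle.1 hnc hds hds'
  apply hfc
  have h3' : 3 ≤ M j j' := by
    rcases hpair with ⟨h1, h2⟩ | ⟨h1, h2⟩
    · rw [h1, h2]
      exact h3
    · rw [h1, h2, M.symmetric s' s]
      exact h3
  refine ⟨x, 1, j, j', h3', ?_, ?_⟩
  · rw [mul_one]
    exact hwx
  · rw [cs.length_one, add_zero]
    exact hlenx
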